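/- Let r ≥ 1, let g₀ ∈ ℂ, let g : Fin r → ℂ satisfy gⱼ ≠ g₀ for all j, and let q : Fin r → ℂ. Then the two conditions ∑ⱼ qⱼ = 0 and ∑ⱼ qⱼ/(gⱼ − g₀) = 0 hold simultaneously if and only if the single vector equation ∑ⱼ (qⱼ/(gⱼ − g₀)) • (1 − g₀gⱼ, √(−1)·(1 + g₀gⱼ), g₀ + gⱼ) = 0 holds in ℂ³. -/

import Mathlib

/-- The two defining equations of a discrete holomorphic quadratic differential at a vertex
(`∑ⱼ qⱼ = 0` and `∑ⱼ qⱼ/(gⱼ − g₀) = 0`) hold iff the associated ℂ³-valued discrete 1-form is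
closed at that vertex. -/
theorem stmt_0 (r : ℕ) (hr : 1 ≤ r) (g₀ : ℂ) (g : Fin r → ℂ) (hg : ∀ j, g j ≠ g₀)
    (q : Fin r → ℂ) :
    ((∑ j, q j = 0) ∧ (∑ j, q j / (g j - g₀) = 0)) ↔
      (∑ j, (q j / (g j - g₀)) •
          (![1 - g₀ * g j, Complex.I * (1 + g₀ * g j), g₀ + g j] : Fin 3 → ℂ)) = 0 := by
  set c : Fin r → ℂ := fun j => q j / (g j - g₀) with hc
  have hcg : ∀ j, c j * g j = q j + g₀ * c j := by
    intro j
    have h : g j - g₀ ≠ 0 := sub_ne_zero.mpr (hg j)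
    have hq : c j * (g j - g₀) = q j := div_mul_cancel₀ (q j) h
    linear_combination hq
  have hS1 : ∑ j, c j * g j = (∑ j, q j) + g₀ * ∑ j, c j := by
    rw [Finset.mul_sum, ← Finset.sum_add_distrib]
    exact Finset.sum_congr rfl fun j _ => hcg j
  have hsum : (∑ j, c j • (![1 - g₀ * g j, Complex.I * (1 + g₀ * g j), g₀ + g j] : Fin 3 → ℂ)) =
      ![∑ j, c j * (1 - g₀ * g j), ∑ j, c j * (Complex.I * (1 + g₀ * g j)),
        ∑ j, c j * (g₀ + g j)] := by
    funext i
    fin_cases i <;> simp [Finset.sum_apply]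
  have e0 : ∑ j, c j * (1 - g₀ * g j) = (∑ j, c j) - g₀ * ((∑ j, q j) + g₀ * ∑ j, c j) := by
    rw [← hS1, Finset.mul_sum, ← Finset.sum_sub_distrib]
    exact Finset.sum_congr rfl fun j _ => by ring
  have e1 : ∑ j, c j * (Complex.I * (1 + g₀ * g j)) =
      Complex.I * ((∑ j, c j) + g₀ * ((∑ j, q j) + g₀ * ∑ j, c j)) := by
    have : ∀ j : Fin r, c j * (Complex.I * (1 + g₀ * g j)) =
        Complex.I * (c j + g₀ * (c j * g j)) := fun j => by ring
    rw [Finset.sum_congr rfl fun j _ => this j, ← Finset.mul_sum,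
      Finset.sum_add_distrib, ← Finset.mul_sum, hS1]
  have e2 : ∑ j, c j * (g₀ + g j) = g₀ * (∑ j, c j) + ((∑ j, q j) + g₀ * ∑ j, c j) := by
    rw [← hS1, Finset.mul_sum, ← Finset.sum_add_distrib]
    exact Finset.sum_congr rfl fun j _ => by ring
  rw [hsum]
  simp only [Matrix.cons_eq_zero_iff, Matrix.zero_empty, and_true, e0, e1, e2]
  constructor
  · rintro ⟨hq, hs⟩
    rw [hq, hs] at e0 e1 e2 ⊢
    refine ⟨by ring, by ring, by ring⟩
  · rintro ⟨H0, H1, H2⟩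
    have H1' : (∑ j, c j) + g₀ * ((∑ j, q j) + g₀ * ∑ j, c j) = 0 :=
      (mul_eq_zero.mp H1).resolve_left Complex.I_ne_zero
    have hS : (∑ j, c j) = 0 := by linear_combination (H0 + H1') / 2
    have hQ : (∑ j, q j) = 0 := by linear_combination H2 - 2 * g₀ * hS
    exact ⟨hQ, hS⟩
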